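/- Let E be a finite-dimensional real inner product space and let U, W be subspaces of E with U ∩ W = {0}. Let P_U, P_W, P_{U⊥}, P_{W⊥} denote the orthogonal projections onto U, W, U^⊥, W^⊥ respectively, and set c = sup{⟨u, w⟩ : u ∈ U, w ∈ W, ‖u‖ = ‖w‖ = 1} (with c = 0 if U or W is the zero subspace). Then for every x ∈ E orthogonal to U^⊥ ∩ W^⊥, ‖P_U(P_W x) + P_{U⊥}(P_{W⊥} x)‖ ≤ c ‖x‖. Moreover, if additionally U^⊥ ∩ W^⊥ = {0}, then the operator norm of x ↦ P_U(P_W x) + P_{U⊥}(P_{W⊥} x) equals c. -/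

import Mathlib

open scoped RealInnerProductSpace

noncomputable section

namespace DRAux

variable {E : Type*} [NormedAddCommGroup E] [InnerProductSpace ℝ E] [FiniteDimensional ℝ E]

/-- Orthogonal projection as a continuous linear map `E →L[ℝ] E`. -/
def pj (N : Submodule ℝ E) : E →L[ℝ] E := N.subtypeL ∘L Submodule.orthogonalProjectionOnto N

lemma pj_mem (N : Submodule ℝ E) (x : E) : pj N x ∈ N := (Submodule.orthogonalProjectionOnto N x).2

lemma pj_eq_self {N : Submodule ℝ E} {x : E} (h : x ∈ N) : pj N x = x :=
  Submodule.starProjection_eq_self_iff.2 h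

lemma sub_pj_mem (N : Submodule ℝ E) (x : E) : x - pj N x ∈ Nᗮ :=
  N.sub_starProjection_mem_orthogonal x

lemma pj_orthogonal (N : Submodule ℝ E) (x : E) : pj Nᗮ x = x - pj N x :=
  N.starProjection_orthogonal_val x

lemma pj_zero_of_mem_orthogonal {N : Submodule ℝ E} {x : E} (h : x ∈ Nᗮ) : pj N x = 0 := by
  simp [pj, Submodule.orthogonalProjectionOnto_apply_of_mem_orthogonal h]

lemma inner_pj_self (N : Submodule ℝ E) (x : E) : ⟪pj N x, x⟫ = ‖pj N x‖ ^ 2 := by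
  have h : ⟪pj N x, x - pj N x⟫ = 0 :=
    Submodule.inner_right_of_mem_orthogonal (pj_mem N x) (sub_pj_mem N x)
  rw [inner_sub_right] at h
  have := real_inner_self_eq_norm_sq (pj N x)
  linarith

lemma pythagoras_pj (N : Submodule ℝ E) (x : E) :
    ‖x‖ ^ 2 = ‖pj N x‖ ^ 2 + ‖x - pj N x‖ ^ 2 := by
  have h : ⟪pj N x, x - pj N x⟫ = 0 :=
    Submodule.inner_right_of_mem_orthogonal (pj_mem N x) (sub_pj_mem N x)
  have := norm_add_sq_real (pj N x) (x - pj N x)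
  simp only [add_sub_cancel] at this
  linarith

end DRAux

open DRAux

/-- Principal-angle bound for the linear part of the Douglas–Rachford
iteration: if `U ∩ W = {0}` and `c = sup{⟨u,w⟩ : u ∈ U, w ∈ W, ‖u‖ = ‖w‖ = 1}`
(`c = 0` if `U` or `W` is trivial, matching `sSup ∅ = 0` in `ℝ`), then
`‖P_U P_W x + P_{U⊥} P_{W⊥} x‖ ≤ c‖x‖` for every `x ⊥ (U^⊥ ∩ W^⊥)`, and the operator
norm of `P_U P_W + P_{U⊥} P_{W⊥}` equals `c` when moreover `U^⊥ ∩ W^⊥ = {0}`. -/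
theorem projection_composition_principal_angle_bound
    {E : Type*} [NormedAddCommGroup E] [InnerProductSpace ℝ E] [FiniteDimensional ℝ E]
    (U W : Submodule ℝ E) (hUW : U ⊓ W = ⊥) (c : ℝ)
    (hc : c = sSup {r : ℝ | ∃ u ∈ U, ∃ w ∈ W, ‖u‖ = 1 ∧ ‖w‖ = 1 ∧ r = ⟪u, w⟫}) :
    (∀ x ∈ (Uᗮ ⊓ Wᗮ)ᗮ,
      ‖(U.subtypeL ∘L Submodule.orthogonalProjectionOnto U)
            ((W.subtypeL ∘L Submodule.orthogonalProjectionOnto W) x) +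
          (Uᗮ.subtypeL ∘L Submodule.orthogonalProjectionOnto Uᗮ)
            ((Wᗮ.subtypeL ∘L Submodule.orthogonalProjectionOnto Wᗮ) x)‖ ≤ c * ‖x‖) ∧
      (Uᗮ ⊓ Wᗮ = ⊥ →
        ‖(U.subtypeL ∘L Submodule.orthogonalProjectionOnto U) ∘L
              (W.subtypeL ∘L Submodule.orthogonalProjectionOnto W) +
            (Uᗮ.subtypeL ∘L Submodule.orthogonalProjectionOnto Uᗮ) ∘L
              (Wᗮ.subtypeL ∘L Submodule.orthogonalProjectionOnto Wᗮ)‖ = c) := by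
  set S : Set ℝ := {r : ℝ | ∃ u ∈ U, ∃ w ∈ W, ‖u‖ = 1 ∧ ‖w‖ = 1 ∧ r = ⟪u, w⟫} with hS
  set Z : Submodule ℝ E := Uᗮ ⊓ Wᗮ with hZdef
  -- boundedness of the set
  have hbdd : BddAbove S := by
    refine ⟨1, fun r hr => ?_⟩
    obtain ⟨u, hu, w, hw, hu1, hw1, rfl⟩ := hr
    calc ⟪u, w⟫ ≤ ‖u‖ * ‖w‖ := real_inner_le_norm u w
      _ = 1 := by rw [hu1, hw1, one_mul]
  -- nonnegativity of c
  have hc0 : 0 ≤ c := by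
    rcases S.eq_empty_or_nonempty with hSe | hSne
    · rw [hc, hSe, Real.sSup_empty]
    · obtain ⟨r, hr⟩ := hSne
      have h1 : r ≤ c := by rw [hc]; exact le_csSup hbdd hr
      obtain ⟨u, hu, w, hw, hu1, hw1, rfl⟩ := hr
      have h2 : (-⟪u, w⟫) ∈ S := by
        refine ⟨-u, neg_mem hu, w, hw, by simpa using hu1, hw1, ?_⟩
        rw [inner_neg_left]
      have h3 : -⟪u, w⟫ ≤ c := by rw [hc]; exact le_csSup hbdd h2
      linarith
  -- Lemma A : projection of a vector of W onto U shrinks by factor c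
  have lemA : ∀ w ∈ W, ‖pj U w‖ ≤ c * ‖w‖ := by
    intro w hw
    rcases eq_or_ne (pj U w) 0 with h | h
    · rw [h, norm_zero]; positivity
    have hwne : w ≠ 0 := by rintro rfl; rw [map_zero] at h; exact h rfl
    have hu0 : (0:ℝ) < ‖pj U w‖ := norm_pos_iff.2 h
    have hw0 : (0:ℝ) < ‖w‖ := norm_pos_iff.2 hwne
    have hinner : ⟪pj U w, w⟫ = ‖pj U w‖ ^ 2 := inner_pj_self U w
    have hmem : ⟪(‖pj U w‖⁻¹ • pj U w), (‖w‖⁻¹ • w)⟫ ∈ S := by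
      refine ⟨_, Submodule.smul_mem _ _ (pj_mem U w), _, Submodule.smul_mem _ _ hw, ?_, ?_, rfl⟩
      · rw [norm_smul, norm_inv, norm_norm, inv_mul_cancel₀ (ne_of_gt hu0)]
      · rw [norm_smul, norm_inv, norm_norm, inv_mul_cancel₀ (ne_of_gt hw0)]
    have hle : ⟪(‖pj U w‖⁻¹ • pj U w), (‖w‖⁻¹ • w)⟫ ≤ c := by
      rw [hc]; exact le_csSup hbdd hmem
    rw [real_inner_smul_left, real_inner_smul_right, hinner] at hle
    have hkey : ‖pj U w‖ = (‖pj U w‖⁻¹ * (‖w‖⁻¹ * ‖pj U w‖ ^ 2)) * ‖w‖ := by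
      field_simp
    rw [hkey]
    exact mul_le_mul_of_nonneg_right hle hw0.le
  -- Lemma B : projection onto Uᗮ of a vector of Wᗮ orthogonal to Z shrinks by factor c
  have lemB : ∀ b ∈ Wᗮ ⊓ Zᗮ, ‖pj Uᗮ b‖ ≤ c * ‖b‖ := by
    set M : Submodule ℝ E := Wᗮ ⊓ Zᗮ with hMdef
    intro b hb
    by_cases hM : M = ⊥
    · have hb0 : b = 0 := by rw [hM] at hb; simpa using hb
      simp [hb0]
    -- the compressed operator
    set T : E →L[ℝ] E := pj M ∘L pj Uᗮ ∘L pj M with hTdef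
    have h1 : IsSelfAdjoint (pj M) := isSelfAdjoint_starProjection M
    have h2 : IsSelfAdjoint (pj (E := E) Uᗮ) := isSelfAdjoint_starProjection Uᗮ
    have hTsa : IsSelfAdjoint T := by
      have h3 := h2.conjugate (pj M)
      rw [h1.star_eq, mul_assoc] at h3
      exact h3
    have hf : ∀ y : E, T.reApplyInnerSelf y = ‖pj Uᗮ (pj M y)‖ ^ 2 := by
      intro y
      have hTy : T y = pj M (pj Uᗮ (pj M y)) := rfl
      have h4 : ⟪pj M (pj Uᗮ (pj M y)), y⟫ = ⟪pj Uᗮ (pj M y), pj M y⟫ := by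
        exact Submodule.inner_starProjection_left_eq_right M (pj Uᗮ (pj M y)) y
      rw [ContinuousLinearMap.reApplyInnerSelf_apply, hTy]
      simpa [h4] using inner_pj_self Uᗮ (pj M y)
    -- maximizer on the unit sphere
    obtain ⟨m, hmM, hm0⟩ := Submodule.exists_mem_ne_zero_of_ne_bot hM
    have hsne : (Metric.sphere (0:E) 1).Nonempty := by
      refine ⟨‖m‖⁻¹ • m, ?_⟩
      rw [mem_sphere_zero_iff_norm, norm_smul, norm_inv, norm_norm,
        inv_mul_cancel₀ (norm_ne_zero_iff.2 hm0)]
    obtain ⟨x₀, hx₀s, hmax⟩ := (isCompact_sphere (0:E) 1).exists_isMaxOn hsne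
      T.reApplyInnerSelf_continuous.continuousOn
    have hx₀n : ‖x₀‖ = 1 := mem_sphere_zero_iff_norm.1 hx₀s
    have hx₀0 : x₀ ≠ 0 := by intro h; rw [h, norm_zero] at hx₀n; norm_num at hx₀n
    set μ : ℝ := T.reApplyInnerSelf x₀ with hμdef
    have hmax' : IsMaxOn T.reApplyInnerSelf (Metric.sphere (0:E) ‖x₀‖) x₀ := by
      rw [hx₀n]; exact hmax
    have hEig : T x₀ = μ • x₀ := by
      have h5 := hTsa.eq_smul_self_of_isLocalExtrOn (𝕜 := ℝ) (Or.inr hmax'.localize)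
      have h6 : T.rayleighQuotient x₀ = μ := by
        rw [ContinuousLinearMap.rayleighQuotient, hx₀n]; norm_num; exact hμdef.symm
      rw [h6] at h5
      simpa using h5
    have hμ0 : 0 ≤ μ := by rw [hμdef, hf]; positivity
    have hμb : ∀ y ∈ M, ‖pj Uᗮ y‖ ^ 2 ≤ μ * ‖y‖ ^ 2 := by
      intro y hy
      rcases eq_or_ne y 0 with rfl | hy0
      · simp
      have hy0' : (0:ℝ) < ‖y‖ := norm_pos_iff.2 hy0
      have hys : ‖y‖⁻¹ • y ∈ Metric.sphere (0:E) 1 := by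
        rw [mem_sphere_zero_iff_norm, norm_smul, norm_inv, norm_norm,
          inv_mul_cancel₀ (ne_of_gt hy0')]
      have h7 : T.reApplyInnerSelf (‖y‖⁻¹ • y) ≤ μ := hmax hys
      rw [hf, pj_eq_self (Submodule.smul_mem M ‖y‖⁻¹ hy), map_smul, norm_smul, norm_inv,
        norm_norm] at h7
      have h8 : (‖y‖⁻¹ * ‖pj Uᗮ y‖) ^ 2 ≤ μ := h7
      have h9 := mul_le_mul_of_nonneg_right h8 (le_of_lt (pow_pos hy0' 2))
      calc ‖pj Uᗮ y‖ ^ 2 = (‖y‖⁻¹ * ‖pj Uᗮ y‖) ^ 2 * ‖y‖ ^ 2 := by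
            field_simp
        _ ≤ μ * ‖y‖ ^ 2 := h9
    -- the top eigenvalue is at most c ^ 2
    have hμc : μ ≤ c ^ 2 := by
      rcases eq_or_lt_of_le hμ0 with h0 | hμpos
      · rw [← h0]; positivity
      have hx₀M : x₀ ∈ M := by
        have h10 : x₀ = μ⁻¹ • T x₀ := by
          rw [hEig, smul_smul, inv_mul_cancel₀ (ne_of_gt hμpos), one_smul]
        rw [h10]
        exact Submodule.smul_mem _ _ (pj_mem M _)
      have hpjMx₀ : pj M x₀ = x₀ := pj_eq_self hx₀M
      have hx₀W : x₀ ∈ Wᗮ := (Submodule.mem_inf.1 hx₀M).1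
      have hx₀Z : x₀ ∈ Zᗮ := (Submodule.mem_inf.1 hx₀M).2
      set v : E := pj Uᗮ x₀ with hvdef
      have hμeq : μ = ‖v‖ ^ 2 := by rw [hμdef, hf, hpjMx₀]
      have hvU : v ∈ Uᗮ := pj_mem Uᗮ x₀
      have hvZ : v ∈ Zᗮ := by
        rw [Submodule.mem_orthogonal]
        intro z hz
        have hzU : z ∈ Uᗮ := (Submodule.mem_inf.1 hz).1
        have hv' : v = x₀ - pj U x₀ := pj_orthogonal U x₀
        have hz1 : ⟪z, x₀⟫ = 0 := (Submodule.mem_orthogonal Z x₀).1 hx₀Z z hz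
        have hz2 : ⟪z, pj U x₀⟫ = 0 := by
          rw [real_inner_comm]
          exact Submodule.inner_right_of_mem_orthogonal (pj_mem U x₀) hzU
        rw [hv', inner_sub_right, hz1, hz2, sub_zero]
      -- pj M v = pj Wᗮ v
      have hpjMv : pj M v = pj Wᗮ v := by
        have hmemM : pj Wᗮ v ∈ M := by
          rw [hMdef]
          refine Submodule.mem_inf.2 ⟨pj_mem Wᗮ v, ?_⟩
          rw [Submodule.mem_orthogonal]
          intro z hz
          have hzW : z ∈ Wᗮ := (Submodule.mem_inf.1 hz).2
          have hv' : pj Wᗮ v = v - pj W v := pj_orthogonal W v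
          have hz1 : ⟪z, v⟫ = 0 := (Submodule.mem_orthogonal Z v).1 hvZ z hz
          have hz2 : ⟪z, pj W v⟫ = 0 := by
            rw [real_inner_comm]
            exact Submodule.inner_right_of_mem_orthogonal (pj_mem W v) hzW
          rw [hv', inner_sub_right, hz1, hz2, sub_zero]
        have hperp : v - pj Wᗮ v ∈ Mᗮ := by
          have h11 : v - pj Wᗮ v ∈ W := by
            have := pj_orthogonal W v
            have h12 : v - pj Wᗮ v = pj W v := by rw [this]; abel
            rw [h12]; exact pj_mem W v
          have h13 : W ≤ Mᗮ := by
            refine le_trans (Submodule.le_orthogonal_orthogonal W) ?_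
            exact Submodule.orthogonal_le (le_trans inf_le_left (le_of_eq rfl))
          exact h13 h11
        have h := Submodule.eq_starProjection_of_mem_orthogonal (K := M) hmemM hperp
        exact h
      have hEig' : pj Wᗮ v = μ • x₀ := by
        rw [← hpjMv]
        have hTx₀ : T x₀ = pj M v := by
          show pj M (pj Uᗮ (pj M x₀)) = pj M (pj Uᗮ x₀)
          rw [hpjMx₀]
        rw [← hTx₀, hEig]
      have hPWv : pj W v = v - μ • x₀ := by
        have := pj_orthogonal W v
        rw [hEig'] at this
        rw [this]
        abel
      have hinner_vx : ⟪v, x₀⟫ = μ := by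
        rw [hvdef, inner_pj_self Uᗮ x₀, hμeq]
      have hnPWv : ‖pj W v‖ ^ 2 = μ - μ ^ 2 := by
        rw [hPWv, norm_sub_sq_real, inner_smul_right, hinner_vx, norm_smul, ← hμeq,
          mul_pow, hx₀n]
        rw [Real.norm_eq_abs, sq_abs]
        ring
      have hnPU : ‖pj U x₀‖ ^ 2 = 1 - μ := by
        have hp := pythagoras_pj U x₀
        have hv' : x₀ - pj U x₀ = v := (pj_orthogonal U x₀).symm
        rw [hv', ← hμeq] at hp
        rw [hx₀n] at hp
        nlinarith [hp]
      have hμle1 : μ ≤ 1 := by nlinarith [sq_nonneg ‖pj U x₀‖]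
      rcases eq_or_lt_of_le hμle1 with hμ1 | hμlt1
      · exfalso
        have hPU0 : pj U x₀ = 0 := by
          have : ‖pj U x₀‖ ^ 2 = 0 := by rw [hnPU, ← hμ1]; ring
          have := pow_eq_zero_iff (n := 2) (by norm_num) |>.1 this
          exact norm_eq_zero.1 this
        have hx₀v : x₀ = v := by
          have := pj_orthogonal U x₀
          rw [hPU0] at this
          rw [hvdef, this, sub_zero]
        have hx₀U : x₀ ∈ Uᗮ := hx₀v ▸ hvU
        have hx₀inZ : x₀ ∈ Z := Submodule.mem_inf.2 ⟨hx₀U, hx₀W⟩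
        have : x₀ = 0 := by
          have hd := Submodule.orthogonal_disjoint Z
          exact (Submodule.disjoint_def.1 hd) x₀ hx₀inZ hx₀Z
        exact hx₀0 this
      · have hPUv : pj U v = 0 := pj_zero_of_mem_orthogonal hvU
        have hPUPWv : pj U (pj W v) = -(μ • pj U x₀) := by
          rw [hPWv, map_sub, map_smul, hPUv, zero_sub]
        have hA := lemA (pj W v) (pj_mem W v)
        rw [hPUPWv, norm_neg, norm_smul, Real.norm_eq_abs, abs_of_pos hμpos] at hA
        -- hA : μ * ‖pj U x₀‖ ≤ c * ‖pj W v‖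
        have hsq : (μ * ‖pj U x₀‖) ^ 2 ≤ (c * ‖pj W v‖) ^ 2 := by
          have h1' : 0 ≤ μ * ‖pj U x₀‖ := by positivity
          rw [pow_two, pow_two]
          exact mul_self_le_mul_self h1' hA
        rw [mul_pow, mul_pow, hnPU, hnPWv] at hsq
        have hd : 0 < μ * (1 - μ) := mul_pos hμpos (by linarith)
        have hsq' : μ * (μ * (1 - μ)) ≤ c ^ 2 * (μ * (1 - μ)) := by
          calc μ * (μ * (1 - μ)) = μ ^ 2 * (1 - μ) := by ring
            _ ≤ c ^ 2 * (μ - μ ^ 2) := hsq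
            _ = c ^ 2 * (μ * (1 - μ)) := by ring
        exact le_of_mul_le_mul_right hsq' hd
    -- conclude Lemma B
    have hb2 := hμb b hb
    have hb3 : ‖pj Uᗮ b‖ ^ 2 ≤ (c * ‖b‖) ^ 2 := by
      calc ‖pj Uᗮ b‖ ^ 2 ≤ μ * ‖b‖ ^ 2 := hb2
        _ ≤ c ^ 2 * ‖b‖ ^ 2 := mul_le_mul_of_nonneg_right hμc (sq_nonneg _)
        _ = (c * ‖b‖) ^ 2 := by ring
    calc ‖pj Uᗮ b‖ = Real.sqrt (‖pj Uᗮ b‖ ^ 2) := (Real.sqrt_sq (norm_nonneg _)).symm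
      _ ≤ Real.sqrt ((c * ‖b‖) ^ 2) := Real.sqrt_le_sqrt hb3
      _ = c * ‖b‖ := Real.sqrt_sq (by positivity)
  -- main pointwise bound
  have key : ∀ x ∈ Zᗮ, ‖pj U (pj W x) + pj Uᗮ (pj Wᗮ x)‖ ≤ c * ‖x‖ := by
    intro x hx
    set a : E := pj W x with hadef
    set b : E := pj Wᗮ x with hbdef
    have hab : b = x - a := pj_orthogonal W x
    have haW : a ∈ W := pj_mem W x
    have hbW : b ∈ Wᗮ := pj_mem Wᗮ x
    have hbZ : b ∈ Zᗮ := by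
      rw [Submodule.mem_orthogonal]
      intro z hz
      have hzW : z ∈ Wᗮ := (Submodule.mem_inf.1 hz).2
      have hz1 : ⟪z, x⟫ = 0 := (Submodule.mem_orthogonal Z x).1 hx z hz
      have hz2 : ⟪z, a⟫ = 0 := by
        rw [real_inner_comm]
        exact Submodule.inner_right_of_mem_orthogonal haW hzW
      rw [hab, inner_sub_right, hz1, hz2, sub_zero]
    have h1 : ‖pj U a‖ ≤ c * ‖a‖ := lemA a haW
    have h2 : ‖pj Uᗮ b‖ ≤ c * ‖b‖ := lemB b (Submodule.mem_inf.2 ⟨hbW, hbZ⟩)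
    have horth : ⟪pj U a, pj Uᗮ b⟫ = 0 :=
      Submodule.inner_right_of_mem_orthogonal (pj_mem U a) (pj_mem Uᗮ b)
    have hsum : ‖pj U a + pj Uᗮ b‖ ^ 2 = ‖pj U a‖ ^ 2 + ‖pj Uᗮ b‖ ^ 2 := by
      rw [norm_add_sq_real, horth]; ring
    have hx2 : ‖x‖ ^ 2 = ‖a‖ ^ 2 + ‖b‖ ^ 2 := by
      have := pythagoras_pj W x
      rw [← hadef, ← hab] at this
      exact this
    have hfin : ‖pj U a + pj Uᗮ b‖ ^ 2 ≤ (c * ‖x‖) ^ 2 := by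
      have e1 : ‖pj U a‖ ^ 2 ≤ (c * ‖a‖) ^ 2 := by
        rw [pow_two, pow_two]; exact mul_self_le_mul_self (norm_nonneg _) h1
      have e2 : ‖pj Uᗮ b‖ ^ 2 ≤ (c * ‖b‖) ^ 2 := by
        rw [pow_two, pow_two]; exact mul_self_le_mul_self (norm_nonneg _) h2
      rw [hsum]
      calc ‖pj U a‖ ^ 2 + ‖pj Uᗮ b‖ ^ 2 ≤ (c * ‖a‖) ^ 2 + (c * ‖b‖) ^ 2 := add_le_add e1 e2
        _ = c ^ 2 * (‖a‖ ^ 2 + ‖b‖ ^ 2) := by ring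
        _ = c ^ 2 * ‖x‖ ^ 2 := by rw [← hx2]
        _ = (c * ‖x‖) ^ 2 := by ring
    calc ‖pj U a + pj Uᗮ b‖ = Real.sqrt (‖pj U a + pj Uᗮ b‖ ^ 2) :=
          (Real.sqrt_sq (norm_nonneg _)).symm
      _ ≤ Real.sqrt ((c * ‖x‖) ^ 2) := Real.sqrt_le_sqrt hfin
      _ = c * ‖x‖ := Real.sqrt_sq (by positivity)
  constructor
  · intro x hx
    exact key x hx
  · intro hZbot
    set Tf : E →L[ℝ] E := pj U ∘L pj W + pj Uᗮ ∘L pj Wᗮ with hTfdef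
    have hTf_apply : ∀ x : E, Tf x = pj U (pj W x) + pj Uᗮ (pj Wᗮ x) := fun x => rfl
    have hub : ‖Tf‖ ≤ c := by
      refine ContinuousLinearMap.opNorm_le_bound _ hc0 (fun x => ?_)
      rw [hTf_apply]
      refine key x ?_
      rw [hZdef] at hZbot ⊢
      rw [hZbot, Submodule.bot_orthogonal_eq_top]
      trivial
    have hlb : c ≤ ‖Tf‖ := by
      rcases S.eq_empty_or_nonempty with hSe | hSne
      · rw [hc, hSe, Real.sSup_empty]
        exact norm_nonneg _
      rw [hc]
      refine csSup_le hSne (fun r hr => ?_)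
      obtain ⟨u, hu, w, hw, hu1, hw1, rfl⟩ := hr
      have hTw : Tf w = pj U w := by
        rw [hTf_apply, pj_eq_self hw,
          pj_zero_of_mem_orthogonal (Submodule.le_orthogonal_orthogonal W hw), map_zero, add_zero]
      have hzero : ⟪u, w - pj U w⟫ = 0 :=
        Submodule.inner_right_of_mem_orthogonal hu (sub_pj_mem U w)
      rw [inner_sub_right] at hzero
      calc ⟪u, w⟫ = ⟪u, pj U w⟫ := by linarith
        _ ≤ ‖u‖ * ‖pj U w‖ := real_inner_le_norm _ _
        _ = ‖Tf w‖ := by rw [hTw, hu1, one_mul]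
        _ ≤ ‖Tf‖ * ‖w‖ := Tf.le_opNorm w
        _ = ‖Tf‖ := by rw [hw1, mul_one]
    exact le_antisymm hub hlb
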